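/- Let C ⊆ F_{q^m}^n be an F_{q^m}-linear vector rank-metric code and let Γ = {γ_1,…,γ_m} and Γ' = {γ'_1,…,γ'_m} be orthogonal bases of F_{q^m} over F_q, i.e. Tr(γ_i γ'_j) = 1 if i = j and 0 otherwise, where Tr is the field trace from F_{q^m} to F_q. Then Γ(C)^⊥ = Γ'(C^⊥), where Γ(C)^⊥ is the dual of Γ(C) under the trace bilinear form (M,N) ↦ tr(M N^T) on Mat_{n×m}(F_q), and C^⊥ = {v ∈ F_{q^m}^n : ⟨v,w⟩ = 0 for all w ∈ C} is the dual under the standard inner product of F_{q^m}^n. -/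

import Mathlib

open Matrix

/-- The `Fq`-linear map `v ↦ Γ(v)` from `Fqm^n` to `n × m` matrices over `Fq`,
where `Γ(v) i j` is the `j`-th coordinate of `v i` in the basis `Γ`. -/
noncomputable def gammaLin {Fq Fqm : Type*} [Field Fq] [Field Fqm] [Algebra Fq Fqm]
    {n m : ℕ} (Γ : Module.Basis (Fin m) Fq Fqm) :
    (Fin n → Fqm) →ₗ[Fq] Matrix (Fin n) (Fin m) Fq where
  toFun v := Matrix.of fun i j => Γ.repr (v i) j
  map_add' v w := by ext i j; simp
  map_smul' c v := by ext i j; simp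

/-- The dual of a matrix rank-metric code under the trace bilinear form
`(M, N) ↦ tr (M * Nᵀ)`. -/
def dualMat {Fq : Type*} [Field Fq] {n m : ℕ}
    (C : Submodule Fq (Matrix (Fin n) (Fin m) Fq)) :
    Submodule Fq (Matrix (Fin n) (Fin m) Fq) where
  carrier := {M | ∀ N ∈ C, Matrix.trace (M * Nᵀ) = 0}
  add_mem' := fun {a b} ha hb N hN => by
    simp [Matrix.add_mul, ha N hN, hb N hN]
  zero_mem' := fun N hN => by simp
  smul_mem' := fun c a ha N hN => by
    simp [Matrix.smul_mul, ha N hN]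

/-- The dual of a vector rank-metric code under the standard inner product of `Fqm^n`. -/
def dualVec {Fqm : Type*} [Field Fqm] {n : ℕ}
    (C : Submodule Fqm (Fin n → Fqm)) : Submodule Fqm (Fin n → Fqm) where
  carrier := {v | ∀ w ∈ C, ∑ i, v i * w i = 0}
  add_mem' := fun {a b} ha hb w hw => by
    simp [add_mul, Finset.sum_add_distrib, ha w hw, hb w hw]
  zero_mem' := fun w hw => by simp
  smul_mem' := fun c a ha w hw => by
    simp [smul_eq_mul, mul_assoc, ← Finset.mul_sum, ha w hw]


lemma trace_mul_repr {Fq Fqm : Type*} [Field Fq] [Field Fqm] [Algebra Fq Fqm] {m : ℕ}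
    (Γ Γ' : Module.Basis (Fin m) Fq Fqm)
    (horth : ∀ i j : Fin m,
      Algebra.trace Fq Fqm (Γ i * Γ' j) = if i = j then 1 else 0) (x y : Fqm) :
    Algebra.trace Fq Fqm (x * y) = ∑ j, Γ.repr x j * Γ'.repr y j := by
  conv_lhs => rw [← Γ.sum_repr x, ← Γ'.sum_repr y]
  rw [Finset.sum_mul_sum, map_sum]
  simp only [map_sum, mul_smul_comm, smul_mul_assoc, _root_.map_smul, horth, smul_eq_mul,
    mul_ite, mul_one, mul_zero, Finset.sum_ite_eq', Finset.mem_univ, if_true,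
    smul_ite, smul_zero]
  rw [Finset.sum_comm]
  refine Finset.sum_congr rfl fun j _ => ?_
  rw [Finset.sum_eq_single j (fun b _ hb => by simp [hb]) (by simp), if_pos rfl, mul_comm]

lemma trace_nondeg {Fq Fqm : Type*} [Field Fq] [Field Fqm] [Algebra Fq Fqm] {m : ℕ}
    (Γ Γ' : Module.Basis (Fin m) Fq Fqm)
    (horth : ∀ i j : Fin m,
      Algebra.trace Fq Fqm (Γ i * Γ' j) = if i = j then 1 else 0)
    (x : Fqm) (h : ∀ c : Fqm, Algebra.trace Fq Fqm (c * x) = 0) :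
    x = 0 := by
  have hr : ∀ i, Γ'.repr x i = 0 := by
    intro i
    have h2 := h (Γ i)
    rw [trace_mul_repr Γ Γ' horth] at h2
    simpa [Module.Basis.repr_self, Finsupp.single_apply] using h2
  have : Γ'.repr x = 0 := Finsupp.ext hr
  simpa using congrArg Γ'.repr.symm this

/-- If `Γ` and `Γ'` are orthogonal bases of `Fqm` over `Fq`, then `Γ(C)^⊥ = Γ'(C^⊥)`. -/
theorem stmt13 {Fq Fqm : Type*} [Field Fq] [Fintype Fq] [Field Fqm] [Algebra Fq Fqm]
    {n m : ℕ} (hn : 0 < n) (Γ Γ' : Module.Basis (Fin m) Fq Fqm)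
    (horth : ∀ i j : Fin m,
      Algebra.trace Fq Fqm (Γ i * Γ' j) = if i = j then 1 else 0)
    (C : Submodule Fqm (Fin n → Fqm)) :
    dualMat (Submodule.map (gammaLin Γ) (C.restrictScalars Fq)) =
      Submodule.map (gammaLin Γ') ((dualVec C).restrictScalars Fq) := by
  have key : ∀ (w v : Fin n → Fqm),
      Matrix.trace ((gammaLin Γ') w * ((gammaLin Γ) v)ᵀ) =
        Algebra.trace Fq Fqm (∑ i, v i * w i) := by
    intro w v
    rw [map_sum]
    simp only [Matrix.trace, Matrix.diag, Matrix.mul_apply, Matrix.transpose_apply,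
      gammaLin, LinearMap.coe_mk, AddHom.coe_mk, Matrix.of_apply]
    refine Finset.sum_congr rfl fun i _ => ?_
    rw [trace_mul_repr Γ Γ' horth]
    exact Finset.sum_congr rfl fun j _ => mul_comm _ _
  apply le_antisymm
  · intro M hM
    set w : Fin n → Fqm := fun i => Γ'.equivFun.symm (M i) with hwdef
    have hMw : gammaLin Γ' w = M := by
      ext i j
      show Γ'.repr (w i) j = M i j
      have hwi : w i = Γ'.equivFun.symm (M i) := rfl
      rw [hwi, ← Module.Basis.equivFun_apply, LinearEquiv.apply_symm_apply]
    refine ⟨w, ?_, hMw⟩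
    intro u hu
    have h0 : ∀ c : Fqm, Algebra.trace Fq Fqm (c * ∑ i, w i * u i) = 0 := by
      intro c
      have hcu : c • u ∈ C := C.smul_mem c hu
      have ht := hM (gammaLin Γ (c • u)) ⟨c • u, hcu, rfl⟩
      rw [← hMw, key] at ht
      have e : c * ∑ i, w i * u i = ∑ i, (c • u) i * w i := by
        rw [Finset.mul_sum]
        refine Finset.sum_congr rfl fun i _ => ?_
        simp only [Pi.smul_apply, smul_eq_mul]
        ring
      rw [e]; exact ht
    exact trace_nondeg Γ Γ' horth _ h0
  · rintro _ ⟨w, hw, rfl⟩ _ ⟨v, hv, rfl⟩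
    rw [key]
    have h0 : ∑ i, v i * w i = 0 := by
      have := hw v hv
      rw [← this]
      exact Finset.sum_congr rfl fun i _ => mul_comm _ _
    simp [h0]
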